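/- For all j₁, j₂, j₃ ∈ R′ with j₁ < j₂ < j₃, it holds rend(j₁) ≤ j₃ − τ − 1. Consequently, every position x ∈ [1..n] belongs to at most two intervals of the family {[j..rend(j)) : j ∈ R′}, and ∑_{j ∈ R′} (rend(j) − j) ≤ 2n. -/

import Mathlib

open scoped Classical

namespace CSA

/-- Character of a 1-indexed string at position `i` (junk value 0 out of range). -/
def idx (S : List ℕ) (i : ℕ) : ℕ := S.getD (i - 1) 0

/-- Substring `S[i..j)` in the 1-indexed, half-open convention. -/
def sub (S : List ℕ) (i j : ℕ) : List ℕ := (S.drop (i - 1)).take (j - i)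

/-- Suffix `S[i..|S|]` (1-indexed). -/
def suf (S : List ℕ) (i : ℕ) : List ℕ := S.drop (i - 1)

/-- Length of the longest common prefix of two strings. -/
def lcp (A B : List ℕ) : ℕ := ((A.zip B).takeWhile fun p => p.1 == p.2).length

/-- `LCE T j₁ j₂` is the length of the longest common prefix of `T[j₁..n]` and `T[j₂..n]`. -/
def LCE (T : List ℕ) (j₁ j₂ : ℕ) : ℕ := lcp (suf T j₁) (suf T j₂)

/-- `p` is a period of `S`. -/
def IsPeriod (S : List ℕ) (p : ℕ) : Prop :=
  1 ≤ p ∧ p ≤ S.length ∧ ∀ i, i + p < S.length → S.getD i 0 = S.getD (i + p) 0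

/-- The shortest period of `S`. -/
noncomputable def per (S : List ℕ) : ℕ := sInf {p | IsPeriod S p}

/-- `R = {i ∈ [1..n−3τ+2] : per(T[i..i+3τ−1)) ≤ τ/3}`. -/
noncomputable def R (T : List ℕ) (τ : ℕ) : Set ℕ :=
  {i | 1 ≤ i ∧ i + 3 * τ ≤ T.length + 2 ∧ 3 * per (sub T i (i + 3 * τ - 1)) ≤ τ}

/-- `rend(j) = min{j′ ≥ j : j′ ∉ R} + 3τ − 2`. -/
noncomputable def rend (T : List ℕ) (τ j : ℕ) : ℕ :=
  sInf {j' | j ≤ j' ∧ j' ∉ R T τ} + 3 * τ - 2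

/-- `L-root(j)`: lexicographically smallest among `{T[j+t..j+t+p) : 0 ≤ t < p}`
where `p = per(T[j..j+3τ−1))`. -/
noncomputable def Lroot (T : List ℕ) (τ j : ℕ) : List ℕ :=
  WithTop.untopD [] ((Finset.range (per (sub T j (j + 3 * τ - 1)))).image fun t =>
      sub T (j + t) (j + t + per (sub T j (j + 3 * τ - 1)))).min

/-- `L-head(j)`: the (unique) `s ∈ [0..p)` with `T[j+s..j+s+p) = L-root(j)`. -/
noncomputable def Lhead (T : List ℕ) (τ j : ℕ) : ℕ :=
  sInf {s | s < per (sub T j (j + 3 * τ - 1)) ∧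
    sub T (j + s) (j + s + per (sub T j (j + 3 * τ - 1))) = Lroot T τ j}

noncomputable def Lexp (T : List ℕ) (τ j : ℕ) : ℕ :=
  (rend T τ j - j - Lhead T τ j) / per (sub T j (j + 3 * τ - 1))

noncomputable def Ltail (T : List ℕ) (τ j : ℕ) : ℕ :=
  (rend T τ j - j - Lhead T τ j) % per (sub T j (j + 3 * τ - 1))

noncomputable def rendfull (T : List ℕ) (τ j : ℕ) : ℕ := rend T τ j - Ltail T τ j

/-- `type(j) = +1` if `rend(j) ≤ n` and `T[rend(j)] > T[rend(j)−p]`, and `−1` otherwise. -/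
noncomputable def typ (T : List ℕ) (τ j : ℕ) : ℤ :=
  if rend T τ j ≤ T.length ∧
      idx T (rend T τ j - per (sub T j (j + 3 * τ - 1))) < idx T (rend T τ j)
    then 1 else -1

noncomputable def Rminus (T : List ℕ) (τ : ℕ) : Set ℕ := {j ∈ R T τ | typ T τ j = -1}

noncomputable def RH (T : List ℕ) (τ : ℕ) (H : List ℕ) : Set ℕ :=
  {j ∈ R T τ | Lroot T τ j = H}

noncomputable def RsH (T : List ℕ) (τ s : ℕ) (H : List ℕ) : Set ℕ :=
  {j ∈ R T τ | Lroot T τ j = H ∧ Lhead T τ j = s}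

noncomputable def RminusH (T : List ℕ) (τ : ℕ) (H : List ℕ) : Set ℕ :=
  Rminus T τ ∩ RH T τ H

noncomputable def RminusSH (T : List ℕ) (τ s : ℕ) (H : List ℕ) : Set ℕ :=
  Rminus T τ ∩ RsH T τ s H

noncomputable def Rprime (T : List ℕ) (τ : ℕ) : Set ℕ := {j ∈ R T τ | j - 1 ∉ R T τ}

/-- `Occ(P,S)`: the set of (1-indexed) starting positions of occurrences of `P` in `S`. -/
def OccSet (P S : List ℕ) : Set ℕ :=
  {j | 1 ≤ j ∧ j + P.length ≤ S.length + 1 ∧ sub S j (j + P.length) = P}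

noncomputable def RangeBeg (P T : List ℕ) : ℕ :=
  Set.ncard {i | 1 ≤ i ∧ i ≤ T.length ∧ suf T i < P}

noncomputable def RangeEnd (P T : List ℕ) : ℕ := RangeBeg P T + (OccSet P T).ncard

/-- `ISA[j]`: the lexicographic rank of the suffix `T[j..n]` among all suffixes of `T`. -/
noncomputable def ISA (T : List ℕ) (j : ℕ) : ℕ :=
  Set.ncard {j' | 1 ≤ j' ∧ j' ≤ T.length ∧ suf T j' ≤ suf T j}

/-- `succ_S(i) = min{j ∈ S ∪ {n−2τ+2} : j ≥ i}`. -/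
noncomputable def succS (T : List ℕ) (τ : ℕ) (Sync : Set ℕ) (i : ℕ) : ℕ :=
  sInf {j | i ≤ j ∧ (j ∈ Sync ∨ j = T.length + 2 - 2 * τ)}

/-- The set `D` of distinguishing prefixes. -/
noncomputable def Dset (T : List ℕ) (τ : ℕ) (Sync : Set ℕ) : Set (List ℕ) :=
  {X | ∃ i, 1 ≤ i ∧ i + 3 * τ ≤ T.length + 2 ∧ i ∉ R T τ ∧
    X = sub T i (succS T τ Sync i + 2 * τ)}

/-- `T^∞[i] = T[1 + ((i−1) mod n)]` for `i : ℤ`. -/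
def tinf (T : List ℕ) (i : ℤ) : ℕ := idx T (((i - 1).emod (T.length : ℤ)).toNat + 1)

/-- `W[i]`: the reverse of `T^∞[s^lex_i − τ .. s^lex_i + 2τ)`. -/
def Wstr (T : List ℕ) (τ : ℕ) (slex : ℕ → ℕ) (i : ℕ) : List ℕ :=
  ((List.range (3 * τ)).map fun k => tinf T ((slex i : ℤ) - (τ : ℤ) + (k : ℤ))).reverse

/- Pattern versions of the `L`-decomposition functions. -/

noncomputable def perP (τ : ℕ) (P : List ℕ) : ℕ := per (P.take (3 * τ - 1))

/-- A pattern is periodic if `|P| ≥ 3τ−1` and `per(P[1..3τ−1]) ≤ τ/3`. -/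
noncomputable def Periodic (τ : ℕ) (P : List ℕ) : Prop :=
  3 * τ - 1 ≤ P.length ∧ 3 * perP τ P ≤ τ

noncomputable def pend (τ : ℕ) (P : List ℕ) : ℕ :=
  1 + perP τ P + lcp P (P.drop (perP τ P))

noncomputable def LrootP (τ : ℕ) (P : List ℕ) : List ℕ :=
  WithTop.untopD [] ((Finset.range (perP τ P)).image fun t => (P.drop t).take (perP τ P)).min

noncomputable def LheadP (τ : ℕ) (P : List ℕ) : ℕ :=
  sInf {s | s < perP τ P ∧ (P.drop s).take (perP τ P) = LrootP τ P}

noncomputable def LexpP (τ : ℕ) (P : List ℕ) : ℕ :=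
  (pend τ P - 1 - LheadP τ P) / perP τ P

noncomputable def LtailP (τ : ℕ) (P : List ℕ) : ℕ :=
  (pend τ P - 1 - LheadP τ P) % perP τ P

noncomputable def pendfullP (τ : ℕ) (P : List ℕ) : ℕ := pend τ P - LtailP τ P

noncomputable def typP (τ : ℕ) (P : List ℕ) : ℤ :=
  if pend τ P ≤ P.length ∧ idx P (pend τ P - perP τ P) < idx P (pend τ P)
    then 1 else -1

/-- `pow(H)`: the prefix of length `|H|·⌈τ/|H|⌉` of `H^∞`. -/
def powS (τ : ℕ) (H : List ℕ) : List ℕ :=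
  (List.replicate ((τ + H.length - 1) / H.length) H).flatten

/-! ### Auxiliary lemmas for Statement 19 -/

/-- `T[a..b)` has period `p`, phrased positionally on `idx`. -/
def pOn (T : List ℕ) (a b p : ℕ) : Prop :=
  ∀ i, a ≤ i → i + p < b → idx T i = idx T (i + p)

lemma sub_length' {T : List ℕ} {a L : ℕ} (ha : 1 ≤ a) (hL : a + L ≤ T.length + 1) :
    (sub T a (a + L)).length = L := by
  unfold sub
  rw [List.length_take, List.length_drop]
  omega

lemma sub_getD' {T : List ℕ} {a L i : ℕ} (ha : 1 ≤ a) (hL : a + L ≤ T.length + 1)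
    (hi : i < L) : (sub T a (a + L)).getD i 0 = idx T (a + i) := by
  unfold sub idx
  have h1 : a + L - a = L := by omega
  rw [h1, List.getD_eq_getElem?_getD, List.getD_eq_getElem?_getD,
    List.getElem?_take, List.getElem?_drop]
  have h2 : a - 1 + i = a + i - 1 := by omega
  simp [hi, h2]

lemma per_le_of_isPeriod {S : List ℕ} {p : ℕ} (h : IsPeriod S p) : per S ≤ p :=
  Nat.sInf_le h

lemma isPeriod_per {S : List ℕ} (h : S ≠ []) : IsPeriod S (per S) := by
  have hne : {p | IsPeriod S p}.Nonempty := by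
    refine ⟨S.length, ?_, le_rfl, fun i hi => absurd hi (by omega)⟩
    have := List.length_pos_iff.2 h
    omega
  exact Nat.sInf_mem hne

lemma pOn_of_mem_R {T : List ℕ} {τ j : ℕ} (hτ : 1 ≤ τ) (hj : j ∈ R T τ) :
    1 ≤ per (sub T j (j + 3 * τ - 1)) ∧ 3 * per (sub T j (j + 3 * τ - 1)) ≤ τ ∧
      pOn T j (j + 3 * τ - 1) (per (sub T j (j + 3 * τ - 1))) := by
  obtain ⟨h1, h2, h3⟩ := hj
  have harg : j + 3 * τ - 1 = j + (3 * τ - 1) := by omega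
  have hL : j + (3 * τ - 1) ≤ T.length + 1 := by omega
  have hlen : (sub T j (j + (3 * τ - 1))).length = 3 * τ - 1 := sub_length' h1 hL
  have hne : sub T j (j + (3 * τ - 1)) ≠ [] := by
    intro h
    rw [h] at hlen
    simp at hlen
    omega
  have hper := isPeriod_per hne
  obtain ⟨hp1, hp2, hp3⟩ := hper
  rw [hlen] at hp2 hp3
  refine ⟨by rw [harg]; exact hp1, h3, ?_⟩
  intro i hi hib
  rw [harg] at hib ⊢
  set p := per (sub T j (j + (3 * τ - 1)))
  have hi' : i - j + p < 3 * τ - 1 := by omega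
  have := hp3 (i - j) hi'
  rw [sub_getD' h1 hL (by omega), sub_getD' h1 hL (by omega)] at this
  have e1 : j + (i - j) = i := by omega
  have e2 : j + (i - j + p) = i + p := by omega
  rw [e1, e2] at this
  exact this

lemma mem_R_of_pOn {T : List ℕ} {τ k g : ℕ} (h1 : 1 ≤ k) (h2 : k + 3 * τ ≤ T.length + 2)
    (hg1 : 1 ≤ g) (hg3 : 3 * g ≤ τ) (hp : pOn T k (k + 3 * τ - 1) g) : k ∈ R T τ := by
  have harg : k + 3 * τ - 1 = k + (3 * τ - 1) := by omega
  have hL : k + (3 * τ - 1) ≤ T.length + 1 := by omega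
  have hlen : (sub T k (k + (3 * τ - 1))).length = 3 * τ - 1 := sub_length' h1 hL
  have hIsP : IsPeriod (sub T k (k + (3 * τ - 1))) g := by
    refine ⟨hg1, by rw [hlen]; omega, ?_⟩
    intro i hi
    rw [hlen] at hi
    rw [sub_getD' h1 hL (by omega), sub_getD' h1 hL (by omega)]
    have := hp (k + i) (by omega) (by omega)
    rw [← add_assoc] at *
    exact this
  refine ⟨h1, h2, ?_⟩
  have hle : per (sub T k (k + 3 * τ - 1)) ≤ g := by
    rw [harg]; exact per_le_of_isPeriod hIsP
  omega

/-- Shifting by multiples of a period: from `i < t` we can reach a multiple-of-`p`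
shift `m` landing in `[t, t+p)`, valid as a shift anywhere in the domain. -/
lemma multi {T : List ℕ} {a b p : ℕ} (h : pOn T a b p) (hp : 1 ≤ p) :
    ∀ d i t, t ≤ i + d → i < t →
      ∃ m, t ≤ i + m ∧ i + m < t + p ∧
        ∀ s, a ≤ s → s + m < b → idx T s = idx T (s + m) := by
  intro d
  induction d with
  | zero => intro i t h1 h2; omega
  | succ d IH =>
    intro i t h1 h2
    by_cases hc : t ≤ i + p
    · exact ⟨p, hc, by omega, fun s hs hb => h s hs hb⟩
    · obtain ⟨m, hm1, hm2, hm3⟩ := IH (i + p) t (by omega) (by omega)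
      refine ⟨p + m, by omega, by omega, fun s hs hb => ?_⟩
      have hstep : idx T s = idx T (s + p) := h s hs (by omega)
      have := hm3 (s + p) (by omega) (by omega)
      rw [hstep, this, add_assoc]

/-- Key combinatorial lemma: two nearby elements of `R` sandwich everything
in between into `R`. -/
lemma lemA {T : List ℕ} {τ j j' : ℕ} (hτ : 1 ≤ τ) (hj : j ∈ R T τ) (hj' : j' ∈ R T τ)
    (hle : j ≤ j') (hd : j' + 2 * (τ / 3) + 1 ≤ j + 3 * τ) :
    ∀ k, j ≤ k → k ≤ j' → k ∈ R T τ := by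
  obtain ⟨hp1, hp3, hpOn⟩ := pOn_of_mem_R hτ hj
  obtain ⟨hq1, hq3, hqOn⟩ := pOn_of_mem_R hτ hj'
  set p := per (sub T j (j + 3 * τ - 1)) with hpdef
  set q := per (sub T j' (j' + 3 * τ - 1)) with hqdef
  have hpd : p ≤ τ / 3 := by omega
  have hqd : q ≤ τ / 3 := by omega
  have hs : j' + p + q + 1 ≤ j + 3 * τ := by omega
  have main : ∀ i, j ≤ i → i + q < j' + 3 * τ - 1 → idx T i = idx T (i + q) := by
    intro i hij hiq
    by_cases hcase : j' ≤ i
    · exact hqOn i hcase hiq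
    · push_neg at hcase
      obtain ⟨m, hm1, hm2, hm3⟩ := multi hpOn hp1 (j' - i) i j' (by omega) hcase
      have e1 : idx T i = idx T (i + m) := hm3 i hij (by omega)
      have e2 : idx T (i + q) = idx T (i + q + m) := hm3 (i + q) (by omega) (by omega)
      have e3 : idx T (i + m) = idx T (i + m + q) := hqOn (i + m) (by omega) (by omega)
      have e4 : i + m + q = i + q + m := by omega
      rw [e1, e3, e4, ← e2]
  intro k hk1 hk2
  refine mem_R_of_pOn (by have := hj.1; omega) (by have := hj'.2.1; omega) hq1 hq3 ?_
  intro i hi hib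
  exact main i (by omega) (by omega)

/-- Structure of the maximal run starting at `j ∈ R`. -/
lemma run_lemma {T : List ℕ} {τ j : ℕ} (hτ : 1 ≤ τ) (hj : j ∈ R T τ) :
    ∃ e, j < e ∧ e ∉ R T τ ∧ (∀ k, j ≤ k → k < e → k ∈ R T τ) ∧
      e + 3 * τ ≤ T.length + 3 ∧ rend T τ j + 2 = e + 3 * τ := by
  have hj1 : 1 ≤ j := hj.1
  have hj2 : j + 3 * τ ≤ T.length + 2 := hj.2.1
  have hNmem : T.length + 3 - 3 * τ ∈ {j' | j ≤ j' ∧ j' ∉ R T τ} := by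
    refine ⟨by omega, fun hN => ?_⟩
    have := hN.2.1
    omega
  have hne : ({j' | j ≤ j' ∧ j' ∉ R T τ} : Set ℕ).Nonempty := ⟨_, hNmem⟩
  have hmem := Nat.sInf_mem hne
  have hNle := Nat.sInf_le hNmem
  have hlt : j < sInf {j' | j ≤ j' ∧ j' ∉ R T τ} := by
    rcases Nat.lt_or_ge j (sInf {j' | j ≤ j' ∧ j' ∉ R T τ}) with h | h
    · exact h
    · exfalso
      have h1 := hmem.1
      have heq : sInf {j' | j ≤ j' ∧ j' ∉ R T τ} = j := by omega
      exact (heq ▸ hmem.2) hj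
  have hrend : rend T τ j = sInf {j' | j ≤ j' ∧ j' ∉ R T τ} + 3 * τ - 2 := rfl
  refine ⟨sInf {j' | j ≤ j' ∧ j' ∉ R T τ}, hlt, hmem.2, ?_, by omega, by omega⟩
  intro k hk1 hk2
  by_contra hkR
  have hk : k ∈ {j' | j ≤ j' ∧ j' ∉ R T τ} := ⟨hk1, hkR⟩
  exact absurd (Nat.sInf_le hk) (by omega)

lemma gap_lemma {T : List ℕ} {τ e j'' : ℕ} (hτ : 1 ≤ τ) (he1 : e - 1 ∈ R T τ)
    (he : e ∉ R T τ) (hj'' : j'' ∈ R T τ) (hge : e ≤ j'') :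
    e + 3 * τ ≤ j'' + 2 * (τ / 3) + 1 := by
  by_contra h
  push_neg at h
  have he2 : 1 ≤ e - 1 := he1.1
  exact he (lemA hτ he1 hj'' (by omega) (by omega) e (by omega) hge)

lemma key_lemma {T : List ℕ} {τ j₁ j₂ j₃ : ℕ} (hτ : 1 ≤ τ)
    (h1 : j₁ ∈ Rprime T τ) (h2 : j₂ ∈ Rprime T τ) (h3 : j₃ ∈ Rprime T τ)
    (h12 : j₁ < j₂) (h23 : j₂ < j₃) : rend T τ j₁ + τ + 1 ≤ j₃ := by
  obtain ⟨hj1R, hj1n⟩ := h1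
  obtain ⟨hj2R, hj2n⟩ := h2
  obtain ⟨hj3R, hj3n⟩ := h3
  obtain ⟨e₁, hj1e, he₁R, hrun₁, hbound₁, hrend₁⟩ := run_lemma hτ hj1R
  obtain ⟨e₂, hj2e, he₂R, hrun₂, hbound₂, hrend₂⟩ := run_lemma hτ hj2R
  have h1j1 : 1 ≤ j₁ := hj1R.1
  have h1j2 : 1 ≤ j₂ := hj2R.1
  have hje2 : e₁ ≤ j₂ - 1 := by
    by_contra h
    push_neg at h
    exact hj2n (hrun₁ (j₂ - 1) (by omega) (by omega))
  have hje3 : e₂ ≤ j₃ - 1 := by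
    by_contra h
    push_neg at h
    exact hj3n (hrun₂ (j₃ - 1) (by omega) (by omega))
  have hg1 : e₁ + 3 * τ ≤ j₂ + 2 * (τ / 3) + 1 :=
    gap_lemma hτ (hrun₁ (e₁ - 1) (by omega) (by omega)) he₁R hj2R (by omega)
  have hg2 : e₂ + 3 * τ ≤ j₃ + 2 * (τ / 3) + 1 :=
    gap_lemma hτ (hrun₂ (e₂ - 1) (by omega) (by omega)) he₂R hj3R (by omega)
  omega

/-- Lemma: runs starting at `R′` cover each position at most twice. -/
theorem statement_19
    (σ n τ : ℕ) (T : List ℕ)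
    (hσ : 2 ≤ σ) (hn : 2 ≤ n) (hτ : 1 ≤ τ)
    (hlen : T.length = n) (halph : ∀ c ∈ T, c < σ)
    (hlast : idx T n = 0) (huniq : ∀ i, 1 ≤ i → i < n → idx T i ≠ 0)
    : (∀ j₁ ∈ Rprime T τ, ∀ j₂ ∈ Rprime T τ, ∀ j₃ ∈ Rprime T τ,
        j₁ < j₂ → j₂ < j₃ → rend T τ j₁ + τ + 1 ≤ j₃) ∧
      (∀ x, 1 ≤ x → x ≤ n →
        ({j ∈ Rprime T τ | j ≤ x ∧ x < rend T τ j}).ncard ≤ 2) ∧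
      ∑ j ∈ (Finset.range (n + 1)).filter (· ∈ Rprime T τ), (rend T τ j - j)
        ≤ 2 * n := by
  have part1 : ∀ j₁ ∈ Rprime T τ, ∀ j₂ ∈ Rprime T τ, ∀ j₃ ∈ Rprime T τ,
      j₁ < j₂ → j₂ < j₃ → rend T τ j₁ + τ + 1 ≤ j₃ :=
    fun j₁ h1 j₂ h2 j₃ h3 h12 h23 => key_lemma hτ h1 h2 h3 h12 h23
  have no3 : ∀ x a b c, (a ∈ Rprime T τ ∧ a ≤ x ∧ x < rend T τ a) →
      (b ∈ Rprime T τ ∧ b ≤ x ∧ x < rend T τ b) →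
      (c ∈ Rprime T τ ∧ c ≤ x ∧ x < rend T τ c) → a < b → b < c → False := by
    intro x a b c ha hb hc hab hbc
    have := key_lemma hτ ha.1 hb.1 hc.1 hab hbc
    omega
  have no3' : ∀ x a b c, (a ∈ Rprime T τ ∧ a ≤ x ∧ x < rend T τ a) →
      (b ∈ Rprime T τ ∧ b ≤ x ∧ x < rend T τ b) →
      (c ∈ Rprime T τ ∧ c ≤ x ∧ x < rend T τ c) → a ≠ b → a ≠ c → b ≠ c → False := by
    intro x a b c ha hb hc hab hac hbc
    rcases lt_trichotomy a b with h1 | h1 | h1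
    · rcases lt_trichotomy b c with h2 | h2 | h2
      · exact no3 x a b c ha hb hc h1 h2
      · exact hbc h2
      · rcases lt_trichotomy a c with h3 | h3 | h3
        · exact no3 x a c b ha hc hb h3 h2
        · exact hac h3
        · exact no3 x c a b hc ha hb h3 h1
    · exact hab h1
    · rcases lt_trichotomy a c with h2 | h2 | h2
      · exact no3 x b a c hb ha hc h1 h2
      · exact hac h2
      · rcases lt_trichotomy b c with h3 | h3 | h3
        · exact no3 x b c a hb hc ha h3 h2
        · exact hbc h3
        · exact no3 x c b a hc hb ha h3 h1
  have hfinS : ∀ x : ℕ, ({j ∈ Rprime T τ | j ≤ x ∧ x < rend T τ j}).Finite := by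
    intro x
    refine (Set.finite_Icc 1 x).subset ?_
    intro j hj
    exact ⟨hj.1.1.1, hj.2.1⟩
  have part2 : ∀ x, 1 ≤ x → x ≤ n →
      ({j ∈ Rprime T τ | j ≤ x ∧ x < rend T τ j}).ncard ≤ 2 := by
    intro x hx1 hx2
    by_contra hc
    push_neg at hc
    rw [Set.ncard_eq_toFinset_card _ (hfinS x)] at hc
    obtain ⟨a, b, c, ha, hb, hc', hab, hac, hbc⟩ := Finset.two_lt_card_iff.1 hc
    rw [Set.Finite.mem_toFinset] at ha hb hc'
    exact no3' x a b c ha hb hc' hab hac hbc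
  refine ⟨part1, part2, ?_⟩
  have hrub : ∀ j ∈ Rprime T τ, 1 ≤ j ∧ rend T τ j ≤ n + 1 := by
    intro j hj
    obtain ⟨e, h1, h2, h3, h4, h5⟩ := run_lemma hτ hj.1
    rw [hlen] at h4
    exact ⟨hj.1.1, by omega⟩
  calc ∑ j ∈ (Finset.range (n + 1)).filter (· ∈ Rprime T τ), (rend T τ j - j)
      = ∑ j ∈ (Finset.range (n + 1)).filter (· ∈ Rprime T τ),
          ∑ x ∈ Finset.Icc 1 n, (if j ≤ x ∧ x < rend T τ j then 1 else 0) := by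
        refine Finset.sum_congr rfl fun j hj => ?_
        have hj' := (Finset.mem_filter.1 hj).2
        obtain ⟨hj1, hj2⟩ := hrub j hj'
        rw [← Finset.card_filter]
        have heq : (Finset.Icc 1 n).filter (fun x => j ≤ x ∧ x < rend T τ j)
            = Finset.Ico j (rend T τ j) := by
          ext y
          simp only [Finset.mem_filter, Finset.mem_Icc, Finset.mem_Ico]
          omega
        rw [heq, Nat.card_Ico]
    _ = ∑ x ∈ Finset.Icc 1 n, ∑ j ∈ (Finset.range (n + 1)).filter (· ∈ Rprime T τ),
          (if j ≤ x ∧ x < rend T τ j then 1 else 0) := Finset.sum_comm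
    _ ≤ ∑ _x ∈ Finset.Icc 1 n, 2 := by
        refine Finset.sum_le_sum fun x hx => ?_
        rw [← Finset.card_filter]
        have hx' := Finset.mem_Icc.1 hx
        have hsub2 : (((Finset.range (n + 1)).filter (· ∈ Rprime T τ)).filter
              (fun j => j ≤ x ∧ x < rend T τ j) : Finset ℕ) →
            True := fun _ => trivial
        calc (((Finset.range (n + 1)).filter (· ∈ Rprime T τ)).filter
                (fun j => j ≤ x ∧ x < rend T τ j)).card
            = ((((Finset.range (n + 1)).filter (· ∈ Rprime T τ)).filter
                (fun j => j ≤ x ∧ x < rend T τ j) : Finset ℕ) : Set ℕ).ncard :=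
              (Set.ncard_coe_finset _).symm
          _ ≤ ({j ∈ Rprime T τ | j ≤ x ∧ x < rend T τ j}).ncard := by
              refine Set.ncard_le_ncard ?_ (hfinS x)
              intro j hj
              simp only [Finset.coe_filter, Set.mem_setOf_eq, Finset.mem_filter,
                Finset.mem_range] at hj
              exact ⟨hj.1.2, hj.2⟩
          _ ≤ 2 := part2 x hx'.1 hx'.2
    _ = 2 * n := by
        rw [Finset.sum_const, Nat.card_Icc, smul_eq_mul]
        omega
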